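/- Let a ~ N(0, I_n) be a standard Gaussian random vector in R^n and let x be a unit vector in R^n. Then E[sign(a^T x) · a] = sqrt(2/π) · x. -/

import Mathlib

open MeasureTheory ProbabilityTheory Real

/-- The standard Gaussian measure `N(0, I_n)` on `ℝⁿ`. -/
noncomputable def stdGaussian (n : ℕ) : Measure (Fin n → ℝ) :=
  Measure.pi fun _ : Fin n => gaussianReal 0 1

open Filter Set

noncomputable def psi (t : ℝ) : ℝ := (Real.sqrt (2 * π))⁻¹ * Real.exp (-t ^ 2 / 2)

lemma psi_eq_pdf : ProbabilityTheory.gaussianPDFReal 0 1 = psi := by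
  ext t
  simp [gaussianPDFReal_def, psi]

lemma psi_nonneg (t : ℝ) : 0 ≤ psi t := by
  have := Real.exp_nonneg (-t ^ 2 / 2)
  have h2 : (0:ℝ) ≤ (Real.sqrt (2 * π))⁻¹ := by positivity
  exact mul_nonneg h2 this

lemma psi_neg (t : ℝ) : psi (-t) = psi t := by simp [psi]

lemma measurable_psi : Measurable psi := by
  unfold psi; fun_prop

lemma hasDerivAt_neg_psi (t : ℝ) : HasDerivAt (fun s => -psi s) (t * psi t) t := by
  have h1 : HasDerivAt (fun s : ℝ => -s ^ 2 / 2) (-t) t := by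
    have := ((hasDerivAt_pow 2 t).neg).div_const 2
    refine this.congr_deriv ?_
    simp; ring
  have h2 := (h1.exp.const_mul (Real.sqrt (2 * π))⁻¹).neg
  refine h2.congr_deriv ?_
  simp [psi]; ring

lemma tendsto_psi_atTop : Tendsto psi atTop (nhds 0) := by
  have h1 : Tendsto (fun t : ℝ => -t ^ 2 / 2) atTop atBot := by
    apply Tendsto.atBot_div_const (by norm_num)
    exact tendsto_neg_atBot_iff.mpr (tendsto_pow_atTop two_ne_zero)
  have h2 := (Real.tendsto_exp_atBot.comp h1).const_mul (Real.sqrt (2 * π))⁻¹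
  rw [mul_zero] at h2
  exact h2.congr fun t => rfl

lemma integrable_mul_psi : Integrable (fun t => t * psi t) := by
  have h := (integrable_mul_exp_neg_mul_sq (b := 1/2) (by norm_num)).const_mul
    (Real.sqrt (2 * π))⁻¹
  refine h.congr (Filter.Eventually.of_forall fun t => ?_)
  simp only [psi]
  ring_nf

lemma integral_Ioi_mul_psi (a : ℝ) : ∫ t in Ioi a, t * psi t = psi a := by
  have := integral_Ioi_of_hasDerivAt_of_tendsto' (f := fun s => -psi s)
    (f' := fun t => t * psi t) (a := a) (fun t _ => hasDerivAt_neg_psi t)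
    integrable_mul_psi.integrableOn (tendsto_psi_atTop.neg)
  simpa using this

lemma integral_Iic_mul_psi (a : ℝ) : ∫ t in Iic a, t * psi t = -psi a := by
  have h := integral_comp_neg_Iic a (fun y => y * psi y)
  rw [integral_Ioi_mul_psi] at h
  have h2 : (∫ x in Iic a, -x * psi (-x)) = ∫ x in Iic a, -(x * psi x) := by
    congr 1 with x
    rw [psi_neg]; ring
  rw [h2, integral_neg] at h
  rw [psi_neg] at h
  linarith
lemma integral_stdGauss (g : ℝ → ℝ) :
    ∫ t, g t ∂(gaussianReal 0 1) = ∫ t, psi t * g t := by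
  rw [gaussianReal_of_var_ne_zero _ one_ne_zero, gaussianPDF_def]
  have hme : Measurable fun t => (psi t).toNNReal := measurable_psi.real_toNNReal
  have : (fun x => ENNReal.ofReal (gaussianPDFReal 0 1 x))
      = fun x => ((psi x).toNNReal : ENNReal) := by
    ext x; rw [psi_eq_pdf]; rfl
  rw [this, integral_withDensity_eq_integral_smul hme]
  congr 1 with t
  simp [NNReal.smul_def, Real.coe_toNNReal _ (psi_nonneg t)]

lemma measurable_realSign : Measurable Real.sign := by
  have : Real.sign = fun r : ℝ => if r < 0 then (-1:ℝ) else if 0 < r then 1 else 0 := by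
    ext r; rfl
  rw [this]
  exact Measurable.ite (measurableSet_lt measurable_id measurable_const) measurable_const <|
    Measurable.ite (measurableSet_lt measurable_const measurable_id) measurable_const
      measurable_const

lemma abs_realSign_le (r : ℝ) : |Real.sign r| ≤ 1 := by
  rcases Real.sign_apply_eq r with h | h | h <;> rw [h] <;> norm_num

lemma realSign_mul (a b : ℝ) : Real.sign (a * b) = Real.sign a * Real.sign b := by
  rcases lt_trichotomy a 0 with ha | rfl | ha
  · rcases lt_trichotomy b 0 with hb | rfl | hb
    · rw [Real.sign_of_pos (mul_pos_of_neg_of_neg ha hb), Real.sign_of_neg ha,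
        Real.sign_of_neg hb]; norm_num
    · simp
    · rw [Real.sign_of_neg (mul_neg_of_neg_of_pos ha hb), Real.sign_of_neg ha,
        Real.sign_of_pos hb]; norm_num
  · simp
  · rcases lt_trichotomy b 0 with hb | rfl | hb
    · rw [Real.sign_of_neg (mul_neg_of_pos_of_neg ha hb), Real.sign_of_pos ha,
        Real.sign_of_neg hb]; norm_num
    · simp
    · rw [Real.sign_of_pos (mul_pos ha hb), Real.sign_of_pos ha, Real.sign_of_pos hb]; norm_num

lemma realSign_mul_abs (r : ℝ) : Real.sign r * |r| = r := by
  rcases lt_trichotomy r 0 with h | h | h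
  · rw [Real.sign_of_neg h, abs_of_neg h]; ring
  · simp [h]
  · rw [Real.sign_of_pos h, abs_of_pos h]; ring

/-- key 1D integral: `∫ sign(t+u) t dγ = 2 ψ(u)`. -/
lemma intA (u : ℝ) :
    ∫ t, Real.sign (t + u) * t ∂(gaussianReal 0 1) = 2 * psi u := by
  rw [integral_stdGauss]
  have hmeas : Measurable fun t => psi t * (Real.sign (t + u) * t) := by
    exact (measurable_psi.mul ((measurable_realSign.comp (measurable_id.add_const u)).mul
      measurable_id))
  have hint : Integrable (fun t => psi t * (Real.sign (t + u) * t)) := by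
    refine integrable_mul_psi.abs.mono' hmeas.aestronglyMeasurable ?_
    filter_upwards with t
    rw [Real.norm_eq_abs, abs_mul, abs_mul]
    calc |psi t| * (|Real.sign (t + u)| * |t|) ≤ |psi t| * (1 * |t|) := by
          gcongr; exact abs_realSign_le _
      _ = |t * psi t| := by rw [abs_mul]; ring
  have hsplit : (∫ t, psi t * (Real.sign (t + u) * t))
      = (∫ t in Iic (-u), psi t * (Real.sign (t + u) * t))
        + ∫ t in Ioi (-u), psi t * (Real.sign (t + u) * t) := by
    rw [← setIntegral_union (Iic_disjoint_Ioi le_rfl) measurableSet_Ioi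
      hint.integrableOn hint.integrableOn, Iic_union_Ioi,
      setIntegral_univ]
  rw [hsplit]
  have h1 : (∫ t in Ioi (-u), psi t * (Real.sign (t + u) * t))
      = ∫ t in Ioi (-u), t * psi t := by
    refine setIntegral_congr_fun measurableSet_Ioi fun t ht => ?_
    rw [Real.sign_of_pos (by have := mem_Ioi.mp ht; linarith)]
    ring
  have h2 : (∫ t in Iic (-u), psi t * (Real.sign (t + u) * t))
      = ∫ t in Iic (-u), -(t * psi t) := by
    rw [integral_Iic_eq_integral_Iio, integral_Iic_eq_integral_Iio]
    refine setIntegral_congr_fun measurableSet_Iio fun t ht => ?_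
    rw [Real.sign_of_neg (by have := mem_Iio.mp ht; linarith)]
    ring
  rw [h1, h2, integral_neg, integral_Ioi_mul_psi, integral_Iic_mul_psi, psi_neg]
  ring
lemma integrable_id_stdGauss : Integrable (fun t : ℝ => t) (gaussianReal 0 1) := by
  rw [gaussianReal_of_var_ne_zero _ one_ne_zero, gaussianPDF_def]
  have : (fun x => ENNReal.ofReal (gaussianPDFReal 0 1 x))
      = fun x => ((psi x).toNNReal : ENNReal) := by
    ext x; rw [psi_eq_pdf]; rfl
  rw [this]
  rw [integrable_withDensity_iff_integrable_smul measurable_psi.real_toNNReal]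
  refine integrable_mul_psi.congr (Filter.Eventually.of_forall fun t => ?_)
  simp [NNReal.smul_def, Real.coe_toNNReal _ (psi_nonneg t)]
  ring

/-- completing the square: 1D gaussian integral. -/
lemma intD {B : ℝ} (hB : 0 < B) (c μ0 : ℝ) :
    ∫ t, Real.exp (-(μ0 + t * c) ^ 2 / (2 * B)) ∂(gaussianReal 0 1)
      = Real.sqrt (B / (B + c ^ 2)) * Real.exp (-μ0 ^ 2 / (2 * (B + c ^ 2))) := by
  have hBc : 0 < B + c ^ 2 := by positivity
  set k : ℝ := (B + c ^ 2) / (2 * B) with hk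
  have hkpos : 0 < k := by positivity
  set d : ℝ := μ0 * c / (B + c ^ 2) with hd
  rw [integral_stdGauss]
  have key : ∀ t : ℝ, psi t * Real.exp (-(μ0 + t * c) ^ 2 / (2 * B))
      = (Real.sqrt (2 * π))⁻¹ * Real.exp (-μ0 ^ 2 / (2 * (B + c ^ 2)))
        * Real.exp (-k * (t + d) ^ 2) := by
    intro t
    simp only [psi, mul_assoc]
    congr 1
    rw [← Real.exp_add, ← Real.exp_add]
    have hB' : B ≠ 0 := ne_of_gt hB
    have hBc' : B + c ^ 2 ≠ 0 := ne_of_gt hBc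
    congr 1
    rw [hk, hd]
    field_simp
    ring
  simp_rw [key]
  rw [integral_const_mul, integral_add_right_eq_self (fun t => Real.exp (-k * t ^ 2)) d,
    integral_gaussian]
  have h1 : Real.sqrt (π / k) = Real.sqrt (2 * π) * Real.sqrt (B / (B + c ^ 2)) := by
    rw [← Real.sqrt_mul (by positivity)]
    congr 1
    rw [hk]
    field_simp
  rw [h1]
  have h2 : (Real.sqrt (2 * π))⁻¹ * Real.exp (-μ0 ^ 2 / (2 * (B + c ^ 2)))
        * (Real.sqrt (2 * π) * Real.sqrt (B / (B + c ^ 2)))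
      = (Real.sqrt (2 * π))⁻¹ * Real.sqrt (2 * π)
        * (Real.sqrt (B / (B + c ^ 2)) * Real.exp (-μ0 ^ 2 / (2 * (B + c ^ 2)))) := by ring
  rw [h2, inv_mul_cancel₀ (by positivity), one_mul]
instance (n : ℕ) : IsProbabilityMeasure (stdGaussian n) := by
  unfold _root_.stdGaussian; infer_instance

lemma piFSA_symm (m : ℕ) (i : Fin (m+1)) (t : ℝ) (b : Fin m → ℝ) :
    (MeasurableEquiv.piFinSuccAbove (fun _ : Fin (m+1) => ℝ) i).symm (t, b)
      = i.insertNth t b := by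
  rw [show ((MeasurableEquiv.piFinSuccAbove (fun _ : Fin (m+1) => ℝ) i).symm
      : ℝ × (Fin m → ℝ) → (Fin (m+1) → ℝ))
    = ⇑(Fin.insertNthEquiv (fun _ : Fin (m+1) => ℝ) i) from rfl]
  ext j
  rw [Fin.insertNthEquiv_apply]

lemma lemE (m : ℕ) (c : Fin m → ℝ) {A : ℝ} (hA : 0 < A) (μ0 : ℝ) :
    ∫ b, Real.exp (-(μ0 + ∑ j, b j * c j) ^ 2 / (2 * A)) ∂(stdGaussian m)
      = Real.sqrt (A / (A + ∑ j, c j ^ 2))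
        * Real.exp (-μ0 ^ 2 / (2 * (A + ∑ j, c j ^ 2))) := by
  induction m generalizing μ0 with
  | zero =>
      simp [div_self hA.ne']
  | succ m ih =>
      have hSnn : (0:ℝ) ≤ ∑ j, c ((0 : Fin (m+1)).succAbove j) ^ 2 :=
        Finset.sum_nonneg fun j _ => sq_nonneg _
      have hB : (0:ℝ) < A + ∑ j, c ((0 : Fin (m+1)).succAbove j) ^ 2 := by linarith
      set e := MeasurableEquiv.piFinSuccAbove (fun _ : Fin (m+1) => ℝ) 0 with he
      have hmp := measurePreserving_piFinSuccAbove (fun _ : Fin (m+1) => gaussianReal 0 1) 0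
      set F : (Fin (m+1) → ℝ) → ℝ :=
        fun b => Real.exp (-(μ0 + ∑ j, b j * c j) ^ 2 / (2 * A)) with hF
      have hmeasF : Measurable F := by
        apply Real.measurable_exp.comp
        apply Measurable.div_const
        apply Measurable.neg
        apply Measurable.pow_const
        exact measurable_const.add <| Finset.measurable_sum _
          fun j _ => (measurable_pi_apply j).mul_const _
      have step1 : ∫ b, F b ∂(stdGaussian (m+1))
          = ∫ p, F (e.symm p)
              ∂((gaussianReal 0 1).prod (stdGaussian m)) := by
        have h := hmp.integral_comp e.measurableEmbedding (fun p => F (e.symm p))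
        refine Eq.trans ?_ h
        unfold _root_.stdGaussian
        refine integral_congr_ae (Filter.Eventually.of_forall fun b => ?_)
        simp only [← he, MeasurableEquiv.symm_apply_apply]
      have hsymm : ∀ (t : ℝ) (b : Fin m → ℝ),
          F (e.symm (t, b)) = Real.exp (-((μ0 + t * c 0)
            + ∑ j, b j * c ((0 : Fin (m+1)).succAbove j)) ^ 2 / (2 * A)) := by
        intro t b
        have h1 : e.symm (t, b) = (0 : Fin (m+1)).insertNth t b := piFSA_symm m 0 t b
        rw [h1, hF]
        have h2 : ∑ j, (Fin.insertNth (α := fun _ => ℝ) 0 t b) j * c j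
            = t * c 0 + ∑ j, b j * c ((0 : Fin (m+1)).succAbove j) := by
          rw [Fin.sum_univ_succAbove (fun j => (Fin.insertNth (α := fun _ => ℝ) 0 t b) j * c j) 0]
          simp [Fin.insertNth_apply_same, Fin.insertNth_apply_succAbove]
        simp only [h2]
        ring_nf
      have hint : Integrable (fun p : ℝ × (Fin m → ℝ) => F (e.symm p))
          ((gaussianReal 0 1).prod (stdGaussian m)) := by
        refine (integrable_const (1:ℝ)).mono'
          ((hmeasF.comp e.symm.measurable).aestronglyMeasurable) ?_
        filter_upwards with p
        rw [Real.norm_eq_abs, hF]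
        rw [abs_of_nonneg (Real.exp_nonneg _)]
        rw [Real.exp_le_one_iff]
        apply div_nonpos_of_nonpos_of_nonneg
        · simp [neg_nonpos]; positivity
        · linarith
      rw [step1, integral_prod _ hint]
      have inner : ∀ t : ℝ, (∫ b, F (e.symm (t, b)) ∂(stdGaussian m))
          = Real.sqrt (A / (A + ∑ j, c ((0 : Fin (m+1)).succAbove j) ^ 2))
            * Real.exp (-(μ0 + t * c 0) ^ 2
              / (2 * (A + ∑ j, c ((0 : Fin (m+1)).succAbove j) ^ 2))) := by
        intro t
        simp_rw [hsymm t]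
        exact ih (fun j => c ((0 : Fin (m+1)).succAbove j)) (μ0 + t * c 0)
      simp_rw [inner]
      rw [integral_const_mul, intD hB (c 0) μ0]
      rw [← mul_assoc, ← Real.sqrt_mul (by positivity)]
      have hsum : ∑ j, c j ^ 2
          = c 0 ^ 2 + ∑ j, c ((0 : Fin (m+1)).succAbove j) ^ 2 :=
        Fin.sum_univ_succAbove (fun j => c j ^ 2) 0
      rw [hsum]
      have h3 : A + (c 0 ^ 2 + ∑ j, c ((0 : Fin (m+1)).succAbove j) ^ 2)
          = (A + ∑ j, c ((0 : Fin (m+1)).succAbove j) ^ 2) + c 0 ^ 2 := by ring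
      rw [h3]
      have h4 : A / (A + ∑ j, c ((0 : Fin (m+1)).succAbove j) ^ 2)
            * ((A + ∑ j, c ((0 : Fin (m+1)).succAbove j) ^ 2)
              / ((A + ∑ j, c ((0 : Fin (m+1)).succAbove j) ^ 2) + c 0 ^ 2))
          = A / ((A + ∑ j, c ((0 : Fin (m+1)).succAbove j) ^ 2) + c 0 ^ 2) := by
        rw [div_mul_div_comm, mul_comm A, mul_div_mul_left _ _ hB.ne']
      rw [h4]
lemma integral_id_stdGauss : ∫ t, t ∂(gaussianReal 0 1) = 0 := by
  rw [integral_stdGauss]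
  simp_rw [mul_comm]
  have hsplit : (∫ t, t * psi t)
      = (∫ t in Iic (0:ℝ), t * psi t) + ∫ t in Ioi (0:ℝ), t * psi t := by
    rw [← setIntegral_union (Iic_disjoint_Ioi le_rfl) measurableSet_Ioi
      integrable_mul_psi.integrableOn integrable_mul_psi.integrableOn,
      Iic_union_Ioi, setIntegral_univ]
  rw [hsplit, integral_Iic_mul_psi, integral_Ioi_mul_psi]
  ring

lemma sqrt_two_div_pi : Real.sqrt (2 / π) = 2 * (Real.sqrt (2 * π))⁻¹ := by
  have h4 : (2:ℝ) / π = 4 / (2 * π) := by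
    rw [div_eq_div_iff Real.pi_ne_zero (by positivity)]
    ring
  rw [h4, Real.sqrt_div (by norm_num) (2 * π),
    show Real.sqrt 4 = 2 by rw [show (4:ℝ) = 2 ^ 2 by norm_num, Real.sqrt_sq]; norm_num]
  rw [div_eq_mul_inv]

/-- For `a ~ N(0, I_n)` and a unit vector `x`, `E[sign(aᵀx) · a] = √(2/π) · x`
(coordinatewise). -/
theorem stmt0 (n : ℕ) (x : Fin n → ℝ) (hx : ∑ i, x i ^ 2 = 1) (i : Fin n) :
    ∫ a, Real.sign (∑ j, a j * x j) * a i ∂(stdGaussian n)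
      = Real.sqrt (2 / π) * x i := by
  cases n with
  | zero => exact absurd hx (by simp)
  | succ m =>
    set e := MeasurableEquiv.piFinSuccAbove (fun _ : Fin (m+1) => ℝ) i with he
    have hmp := measurePreserving_piFinSuccAbove (fun _ : Fin (m+1) => gaussianReal 0 1) i
    set F : (Fin (m+1) → ℝ) → ℝ :=
      fun a => Real.sign (∑ j, a j * x j) * a i with hF
    have hmeasF : Measurable F :=
      (measurable_realSign.comp (Finset.measurable_sum _
        fun j _ => (measurable_pi_apply j).mul_const _)).mul (measurable_pi_apply i)
    have step1 : ∫ a, F a ∂(stdGaussian (m+1))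
        = ∫ p, F (e.symm p) ∂((gaussianReal 0 1).prod (stdGaussian m)) := by
      have h := hmp.integral_comp e.measurableEmbedding (fun p => F (e.symm p))
      refine Eq.trans ?_ h
      unfold _root_.stdGaussian
      refine integral_congr_ae (Filter.Eventually.of_forall fun a => ?_)
      simp only [← he, MeasurableEquiv.symm_apply_apply]
    have hsymm : ∀ (t : ℝ) (b : Fin m → ℝ),
        F (e.symm (t, b))
          = Real.sign (t * x i + ∑ j, b j * x (i.succAbove j)) * t := by
      intro t b
      have h1 : e.symm (t, b) = i.insertNth t b := piFSA_symm m i t b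
      rw [h1, hF]
      have h2 : ∑ j, (Fin.insertNth (α := fun _ => ℝ) i t b) j * x j
          = t * x i + ∑ j, b j * x (i.succAbove j) := by
        rw [Fin.sum_univ_succAbove (fun j => (Fin.insertNth (α := fun _ => ℝ) i t b) j * x j) i]
        simp [Fin.insertNth_apply_same, Fin.insertNth_apply_succAbove]
      simp only [h2, Fin.insertNth_apply_same]
    have hfst : Integrable (fun p : ℝ × (Fin m → ℝ) => p.1)
        ((gaussianReal 0 1).prod (stdGaussian m)) := by
      have hmap : ((gaussianReal 0 1).prod (stdGaussian m)).map Prod.fst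
          = gaussianReal 0 1 := by
        rw [Measure.map_fst_prod]
        simp
      have h := (integrable_map_measure (f := Prod.fst) (g := fun t : ℝ => t)
        (by rw [hmap]; exact measurable_id.aestronglyMeasurable)
        measurable_fst.aemeasurable)
      rw [hmap] at h
      exact h.mp integrable_id_stdGauss
    have hint : Integrable (fun p : ℝ × (Fin m → ℝ) => F (e.symm p))
        ((gaussianReal 0 1).prod (stdGaussian m)) := by
      refine hfst.abs.mono'
        ((hmeasF.comp e.symm.measurable).aestronglyMeasurable) ?_
      filter_upwards with p
      rw [hsymm p.1 p.2, Real.norm_eq_abs, abs_mul]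
      calc |Real.sign (p.1 * x i + ∑ j, p.2 j * x (i.succAbove j))| * |p.1|
          ≤ 1 * |p.1| := by gcongr; exact abs_realSign_le _
        _ = |p.1| := one_mul _
    rw [step1, integral_prod_symm _ hint]
    by_cases hw : x i = 0
    · have inner0 : ∀ b : Fin m → ℝ,
          (∫ t, F (e.symm (t, b)) ∂(gaussianReal 0 1)) = 0 := by
        intro b
        simp_rw [hsymm, hw, mul_zero, zero_add]
        rw [integral_const_mul, integral_id_stdGauss, mul_zero]
      simp_rw [inner0]
      simp [hw]
    · -- x i ≠ 0
      have hw2 : (0:ℝ) < x i ^ 2 := by positivity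
      have inner1 : ∀ b : Fin m → ℝ,
          (∫ t, F (e.symm (t, b)) ∂(gaussianReal 0 1))
            = Real.sign (x i)
              * (2 * psi ((∑ j, b j * x (i.succAbove j)) / x i)) := by
        intro b
        have hsgn : ∀ t : ℝ, Real.sign (t * x i + ∑ j, b j * x (i.succAbove j))
            = Real.sign (x i)
              * Real.sign (t + (∑ j, b j * x (i.succAbove j)) / x i) := by
          intro t
          rw [show t * x i + ∑ j, b j * x (i.succAbove j)
              = x i * (t + (∑ j, b j * x (i.succAbove j)) / x i) by
            field_simp]
          exact realSign_mul _ _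
        simp_rw [hsymm, hsgn, mul_assoc]
        rw [integral_const_mul, intA]
      simp_rw [inner1]
      rw [integral_const_mul]
      have hpsi : ∀ b : Fin m → ℝ,
          2 * psi ((∑ j, b j * x (i.succAbove j)) / x i)
            = 2 * (Real.sqrt (2 * π))⁻¹
              * Real.exp (-((0:ℝ) + ∑ j, b j * x (i.succAbove j)) ^ 2
                / (2 * x i ^ 2)) := by
        intro b
        rw [psi, div_pow, zero_add]
        rw [show -((∑ j, b j * x (i.succAbove j)) ^ 2 / x i ^ 2) / 2
            = -(∑ j, b j * x (i.succAbove j)) ^ 2 / (2 * x i ^ 2) by ring]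
        ring
      simp_rw [hpsi]
      rw [integral_const_mul, lemE m (fun j => x (i.succAbove j)) hw2 0]
      have hxsum : x i ^ 2 + ∑ j, x (i.succAbove j) ^ 2 = 1 := by
        rw [← Fin.sum_univ_succAbove (fun j => x j ^ 2) i]
        exact hx
      rw [show x i ^ 2 + ∑ j, x (i.succAbove j) ^ 2 = 1 from hxsum]
      rw [div_one, Real.sqrt_sq_eq_abs]
      simp only [neg_zero, zero_pow, zero_div, Real.exp_zero, mul_one]
      rw [sqrt_two_div_pi]
      rw [show rexp (-(0:ℝ) ^ 2 / 2) = 1 by norm_num, mul_one]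
      rw [show Real.sign (x i) * (2 * (Real.sqrt (2 * π))⁻¹ * |x i|)
          = 2 * (Real.sqrt (2 * π))⁻¹ * (Real.sign (x i) * |x i|) by ring]
      rw [realSign_mul_abs]
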